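/- Let S be a type, let D be a finite set of state–action pairs in S × ℝ, let D_e ⊆ D be a subset, let σ > 0, let α ≥ 0, and let μ : S → ℝ. Then the regularized objective ∑_{(s,a)∈D} (− log f_{μ(s),σ²}(a)) + α · ∑_{(s,a)∈D_e} KL(N(μ(s),σ²) ‖ N(a,σ²)) equals the weighted objective ∑_{(s,a)∈D} (1 + α·𝟙[(s,a) ∈ D_e]) · (− log f_{μ(s),σ²}(a)) minus the constant α · |D_e| · (1/2)·log(2π σ²), where the constant does not depend on μ. In particular, the two objectives have the same minimizers over μ. -/

import Mathlib

open MeasureTheory ProbabilityTheory Real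
open scoped ENNReal NNReal

section Aux

lemma log_gaussianPDFReal_aux (m σ : ℝ) (hσ : 0 < σ) (x : ℝ) :
    Real.log (gaussianPDFReal m ⟨σ ^ 2, sq_nonneg σ⟩ x)
      = - (x - m) ^ 2 / (2 * σ ^ 2) - 1 / 2 * Real.log (2 * Real.pi * σ ^ 2) := by
  have h2 : (0:ℝ) < 2 * Real.pi * σ ^ 2 := by positivity
  show Real.log ((√(2 * π * σ ^ 2))⁻¹ * Real.exp (-(x - m) ^ 2 / (2 * σ ^ 2))) = _
  rw [Real.log_mul (by positivity) (Real.exp_pos _).ne', Real.log_inv, Real.log_exp,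
    Real.log_sqrt h2.le]
  ring

lemma integrable_mul_gaussianPDFReal_aux (m σ : ℝ) (hσ : 0 < σ) :
    Integrable (fun x : ℝ => x * gaussianPDFReal m ⟨σ ^ 2, sq_nonneg σ⟩ x) := by
  have hb : (0:ℝ) < 1 / (2 * σ ^ 2) := by positivity
  have h1 : Integrable (fun x : ℝ => x * Real.exp (-(1 / (2 * σ ^ 2)) * x ^ 2)) :=
    integrable_mul_exp_neg_mul_sq hb
  have h2 : Integrable (fun x : ℝ => Real.exp (-(1 / (2 * σ ^ 2)) * x ^ 2)) :=
    integrable_exp_neg_mul_sq hb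
  have key : Integrable (fun y : ℝ => (y + m) * gaussianPDFReal m ⟨σ ^ 2, sq_nonneg σ⟩ (y + m)) := by
    have : ∀ y : ℝ, gaussianPDFReal m ⟨σ ^ 2, sq_nonneg σ⟩ (y + m)
        = (√(2 * π * σ ^ 2))⁻¹ * Real.exp (-(1 / (2 * σ ^ 2)) * y ^ 2) := by
      intro y
      show (√(2 * π * σ ^ 2))⁻¹ * Real.exp (-(y + m - m) ^ 2 / (2 * σ ^ 2)) = _
      push_cast
      ring_nf
    simp_rw [this, add_mul]
    exact ((h1.const_mul ((√(2 * π * σ ^ 2))⁻¹)).add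
      ((h2.const_mul ((√(2 * π * σ ^ 2))⁻¹)).const_mul m)).congr
      (by filter_upwards with y; simp only [Pi.add_apply]; ring)
  have := key.comp_sub_right m
  refine this.congr ?_
  filter_upwards with x
  simp

lemma integral_mul_gaussianPDFReal_aux (m σ : ℝ) (hσ : 0 < σ) :
    ∫ x : ℝ, x * gaussianPDFReal m ⟨σ ^ 2, sq_nonneg σ⟩ x = m := by
  have hpdf : ∀ y : ℝ, gaussianPDFReal m ⟨σ ^ 2, sq_nonneg σ⟩ (y + m)
      = gaussianPDFReal 0 ⟨σ ^ 2, sq_nonneg σ⟩ y := by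
    intro y; unfold gaussianPDFReal; norm_num
  have hshift : (∫ x : ℝ, x * gaussianPDFReal m ⟨σ ^ 2, sq_nonneg σ⟩ x)
      = ∫ y : ℝ, (y + m) * gaussianPDFReal 0 ⟨σ ^ 2, sq_nonneg σ⟩ y := by
    rw [← integral_add_right_eq_self (fun x => x * gaussianPDFReal m ⟨σ ^ 2, sq_nonneg σ⟩ x) m]
    exact integral_congr_ae (by filter_upwards with y; rw [hpdf])
  have heven : ∀ y : ℝ, gaussianPDFReal 0 ⟨σ ^ 2, sq_nonneg σ⟩ (-y)
      = gaussianPDFReal 0 ⟨σ ^ 2, sq_nonneg σ⟩ y := by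
    intro y; simp [gaussianPDFReal, neg_sq]
  have hodd : (∫ y : ℝ, y * gaussianPDFReal 0 ⟨σ ^ 2, sq_nonneg σ⟩ y) = 0 := by
    have h := integral_neg_eq_self (fun y : ℝ => y * gaussianPDFReal 0 ⟨σ ^ 2, sq_nonneg σ⟩ y)
      (volume : Measure ℝ)
    simp only [heven, neg_mul] at h
    rw [integral_neg] at h
    linarith
  have hint0 : Integrable (fun y : ℝ => y * gaussianPDFReal 0 ⟨σ ^ 2, sq_nonneg σ⟩ y) :=
    integrable_mul_gaussianPDFReal_aux 0 σ hσ
  rw [hshift]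
  have : (∫ y : ℝ, (y + m) * gaussianPDFReal 0 ⟨σ ^ 2, sq_nonneg σ⟩ y)
      = (∫ y : ℝ, y * gaussianPDFReal 0 ⟨σ ^ 2, sq_nonneg σ⟩ y)
        + m * ∫ y : ℝ, gaussianPDFReal 0 ⟨σ ^ 2, sq_nonneg σ⟩ y := by
    rw [← integral_const_mul, ← integral_add hint0 ((integrable_gaussianPDFReal 0 ⟨σ ^ 2, sq_nonneg σ⟩).const_mul m)]
    exact integral_congr_ae (by filter_upwards with y; ring)
  have hv : (⟨σ ^ 2, sq_nonneg σ⟩ : ℝ≥0) ≠ 0 := by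
    intro h
    have h2 : (σ ^ 2 : ℝ) = 0 := congrArg NNReal.toReal h
    exact (pow_pos hσ 2).ne' h2
  rw [this, hodd, integral_gaussianPDFReal_eq_one 0 hv]
  norm_num

end Aux

/-- The Kullback–Leibler divergence `KL(P ‖ Q) = ∫ log (dP/dQ) dP` (real-valued; this
coincides with the usual KL divergence when `P ≪ Q` with finite divergence). -/
noncomputable def klDivReal {Ω : Type*} [MeasurableSpace Ω] (P Q : Measure Ω) : ℝ :=
  ∫ x, Real.log ((P.rnDeriv Q x).toReal) ∂P

lemma klDivReal_gaussian_aux (m a σ : ℝ) (hσ : 0 < σ) :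
    klDivReal (gaussianReal m ⟨σ ^ 2, sq_nonneg σ⟩) (gaussianReal a ⟨σ ^ 2, sq_nonneg σ⟩)
      = - Real.log (gaussianPDFReal m ⟨σ ^ 2, sq_nonneg σ⟩ a)
        - 1 / 2 * Real.log (2 * Real.pi * σ ^ 2) := by
  set v : ℝ≥0 := ⟨σ ^ 2, sq_nonneg σ⟩ with hv_def
  have hv : v ≠ 0 := by
    intro h
    have : (σ ^ 2 : ℝ) = 0 := congrArg NNReal.toReal h
    exact (pow_pos hσ 2).ne' this
  have hPdef : gaussianReal m v = volume.withDensity (gaussianPDF m v) :=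
    gaussianReal_of_var_ne_zero m hv
  have hQdef : gaussianReal a v = volume.withDensity (gaussianPDF a v) :=
    gaussianReal_of_var_ne_zero a hv
  have hrn : (gaussianReal m v).rnDeriv (gaussianReal a v)
      =ᵐ[volume] fun x => (gaussianPDF a v x)⁻¹ * gaussianPDF m v x := by
    rw [hPdef, hQdef]
    have hfin : IsFiniteMeasure (volume.withDensity (gaussianPDF m v)) := hPdef ▸ inferInstance
    have h1 : (volume.withDensity (gaussianPDF m v)).rnDeriv
          (volume.withDensity (gaussianPDF a v))
        =ᵐ[volume] fun x => (gaussianPDF a v x)⁻¹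
          * (volume.withDensity (gaussianPDF m v)).rnDeriv volume x :=
      Measure.rnDeriv_withDensity_right _ _
        (measurable_gaussianPDF a v).aemeasurable
        (Filter.Eventually.of_forall fun x =>
          (ENNReal.ofReal_pos.mpr (gaussianPDFReal_pos a v x hv)).ne')
        (Filter.Eventually.of_forall fun x => by simp [gaussianPDF])
    have h2 : (volume.withDensity (gaussianPDF m v)).rnDeriv volume
        =ᵐ[volume] gaussianPDF m v :=
      Measure.rnDeriv_withDensity volume (measurable_gaussianPDF m v)
    filter_upwards [h1, h2] with x hx1 hx2
    rw [hx1, hx2]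
  have hac : gaussianReal m v ≪ volume := by
    rw [hPdef]; exact withDensity_absolutelyContinuous _ _
  have hlogeq : (fun x => Real.log (((gaussianReal m v).rnDeriv (gaussianReal a v) x).toReal))
      =ᵐ[gaussianReal m v] fun x =>
        ((m - a) / σ ^ 2) * x + (a ^ 2 - m ^ 2) / (2 * σ ^ 2) := by
    filter_upwards [hac.ae_eq hrn] with x hx
    rw [hx]
    have hga : (0:ℝ) < gaussianPDFReal a v x := gaussianPDFReal_pos a v x hv
    have hgm : (0:ℝ) < gaussianPDFReal m v x := gaussianPDFReal_pos m v x hv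
    simp only [gaussianPDF]
    rw [← ENNReal.ofReal_inv_of_pos hga, ← ENNReal.ofReal_mul (by positivity),
      ENNReal.toReal_ofReal (by positivity), Real.log_mul (by positivity) hgm.ne',
      Real.log_inv, log_gaussianPDFReal_aux m σ hσ, log_gaussianPDFReal_aux a σ hσ]
    field_simp
    ring
  rw [klDivReal, integral_congr_ae hlogeq]
  have hwd : gaussianReal m v
      = volume.withDensity (fun x => ((gaussianPDFReal m v x).toNNReal : ℝ≥0∞)) := hPdef
  rw [hwd, integral_withDensity_eq_integral_smul
    ((measurable_gaussianPDFReal m v).real_toNNReal) _]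
  have : (∫ x : ℝ, (gaussianPDFReal m v x).toNNReal
        • (((m - a) / σ ^ 2) * x + (a ^ 2 - m ^ 2) / (2 * σ ^ 2)))
      = ((m - a) / σ ^ 2) * (∫ x : ℝ, x * gaussianPDFReal m v x)
        + ((a ^ 2 - m ^ 2) / (2 * σ ^ 2)) * ∫ x : ℝ, gaussianPDFReal m v x := by
    rw [← integral_const_mul, ← integral_const_mul,
      ← integral_add (((integrable_mul_gaussianPDFReal_aux m σ hσ).const_mul _))
        ((integrable_gaussianPDFReal m v).const_mul _)]
    refine integral_congr_ae (Filter.Eventually.of_forall fun x => ?_)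
    have h0 : (0:ℝ) ≤ gaussianPDFReal m v x := gaussianPDFReal_nonneg m v x
    simp only [NNReal.smul_def, Real.coe_toNNReal _ h0, smul_eq_mul]
    ring
  rw [this, integral_mul_gaussianPDFReal_aux m σ hσ, integral_gaussianPDFReal_eq_one m hv,
    log_gaussianPDFReal_aux m σ hσ, mul_one]
  field_simp
  ring

/-- The regularized objective:
`∑_{(s,a)∈D} (− log f_{μ(s),σ²}(a)) + α · ∑_{(s,a)∈D_e} KL(N(μ(s),σ²) ‖ N(a,σ²))`. -/
noncomputable def regObjective {S : Type*} (D De : Finset (S × ℝ)) (σ α : ℝ)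
    (μ : S → ℝ) : ℝ :=
  (∑ p ∈ D, - Real.log (gaussianPDFReal (μ p.1) ⟨σ ^ 2, sq_nonneg σ⟩ p.2))
    + α * ∑ p ∈ De,
        klDivReal (gaussianReal (μ p.1) ⟨σ ^ 2, sq_nonneg σ⟩)
          (gaussianReal p.2 ⟨σ ^ 2, sq_nonneg σ⟩)

/-- The weighted objective:
`∑_{(s,a)∈D} (1 + α·𝟙[(s,a) ∈ D_e]) · (− log f_{μ(s),σ²}(a))`. -/
noncomputable def weightedObjective {S : Type*} [DecidableEq S]
    (D De : Finset (S × ℝ)) (σ α : ℝ) (μ : S → ℝ) : ℝ :=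
  ∑ p ∈ D, (1 + α * (if p ∈ De then (1 : ℝ) else 0))
      * (- Real.log (gaussianPDFReal (μ p.1) ⟨σ ^ 2, sq_nonneg σ⟩ p.2))

/-- KL regularization as a special case of trajectory weighting (one-dimensional actions):
the regularized objective equals the weighted objective minus the constant
`α · |D_e| · (1/2)·log(2π σ²)`, which does not depend on `μ`; in particular the two
objectives have the same minimizers over `μ`. -/
theorem regObjective_eq_weightedObjective_sub_const {S : Type*} [DecidableEq S]
    (D De : Finset (S × ℝ)) (hDe : De ⊆ D) (σ α : ℝ) (hσ : 0 < σ) (hα : 0 ≤ α) :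
    (∀ μ : S → ℝ,
      regObjective D De σ α μ
        = weightedObjective D De σ α μ
            - α * (De.card : ℝ) * (1 / 2 * Real.log (2 * Real.pi * σ ^ 2)))
    ∧
    (∀ μ₀ : S → ℝ,
      (∀ μ : S → ℝ, regObjective D De σ α μ₀ ≤ regObjective D De σ α μ)
        ↔ (∀ μ : S → ℝ, weightedObjective D De σ α μ₀ ≤ weightedObjective D De σ α μ)) := by
  have key : ∀ μ : S → ℝ,
      regObjective D De σ α μ
        = weightedObjective D De σ α μ
            - α * (De.card : ℝ) * (1 / 2 * Real.log (2 * Real.pi * σ ^ 2)) := by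
    intro μ
    set C : ℝ := 1 / 2 * Real.log (2 * Real.pi * σ ^ 2) with hC
    set L : S × ℝ → ℝ := fun p => - Real.log (gaussianPDFReal (μ p.1) ⟨σ ^ 2, sq_nonneg σ⟩ p.2)
      with hL
    have hKL : ∀ p : S × ℝ,
        klDivReal (gaussianReal (μ p.1) ⟨σ ^ 2, sq_nonneg σ⟩)
          (gaussianReal p.2 ⟨σ ^ 2, sq_nonneg σ⟩) = L p - C := by
      intro p
      rw [klDivReal_gaussian_aux (μ p.1) p.2 σ hσ]
    have hsum1 : (∑ p ∈ De, klDivReal (gaussianReal (μ p.1) ⟨σ ^ 2, sq_nonneg σ⟩)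
          (gaussianReal p.2 ⟨σ ^ 2, sq_nonneg σ⟩))
        = (∑ p ∈ De, L p) - (De.card : ℝ) * C := by
      rw [Finset.sum_congr rfl fun p _ => hKL p, Finset.sum_sub_distrib, Finset.sum_const,
        nsmul_eq_mul]
    have hsum2 : weightedObjective D De σ α μ
        = (∑ p ∈ D, L p) + α * ∑ p ∈ De, L p := by
      rw [weightedObjective]
      have : ∀ p ∈ D, (1 + α * (if p ∈ De then (1 : ℝ) else 0))
            * (- Real.log (gaussianPDFReal (μ p.1) ⟨σ ^ 2, sq_nonneg σ⟩ p.2))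
          = L p + α * (if p ∈ De then L p else 0) := by
        intro p _
        split_ifs <;> simp [hL] <;> ring
      rw [Finset.sum_congr rfl this, Finset.sum_add_distrib, ← Finset.mul_sum,
        Finset.sum_ite_mem, Finset.inter_eq_right.mpr hDe]
    rw [regObjective, hsum2, hsum1]
    ring
  refine ⟨key, fun μ₀ => ?_⟩
  constructor
  · intro h μ
    have h1 := key μ₀
    have h2 := key μ
    have := h μ
    linarith
  · intro h μ
    have h1 := key μ₀
    have h2 := key μ
    have := h μ
    linarith
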